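/- (Coercivity estimate) Under H(l), for every ε > 0 there exists c(ε) > 0 such that ⟨L u, u⟩ ≥ −b|Γ₃|^{1/p}‖a_l‖_{L^{p'}(Γ₃)} − b_l b |Γ₃| − ε‖u‖_{L^p(Γ₃)}^p − c(ε) for all u ∈ L^p(Γ₃). -/

import Mathlib

open MeasureTheory

/-- Coercivity estimate: under H(l), for every `ε > 0` there exists `c(ε) > 0` such that
`⟨L u, u⟩ = ∫_{Γ₃} l(x,u(x)) u(x) dΓ ≥ -b |Γ₃|^{1/p} ‖a_l‖_{p'} - b_l b |Γ₃| - ε ‖u‖_p^p - c(ε)`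
for all `u ∈ L^p(Γ₃)`. -/
theorem boundary_operator_coercivity_estimate
    {Γ₃ : Type*} [MeasurableSpace Γ₃] (σ : Measure Γ₃) [IsFiniteMeasure σ]
    (p p' b : ℝ) (hp : 1 < p) (hp' : p' = p / (p - 1)) (hb : 0 < b)
    (l : Γ₃ → ℝ → ℝ) (a_l : Γ₃ → ℝ) (b_l : ℝ)
    (hl_meas : ∀ s : ℝ, Measurable fun x => l x s)
    (hl_cont : ∀ᵐ x ∂σ, Continuous fun s => l x s)
    (ha_l : 0 ≤ a_l) (ha_lLp : MemLp a_l (ENNReal.ofReal p') σ) (hb_l : 0 < b_l)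
    (hl_growth : ∀ᵐ x ∂σ, ∀ s : ℝ, |l x s| ≤ a_l x + b_l * (1 + |s| ^ (p - 1)))
    (hl_mono : ∀ᵐ x ∂σ, Monotone fun s => l x s)
    (hl_b : ∀ᵐ x ∂σ, l x b = 0) :
    ∀ ε : ℝ, 0 < ε → ∃ c : ℝ, 0 < c ∧
      ∀ u : Γ₃ → ℝ, MemLp u (ENNReal.ofReal p) σ →
        -b * (σ Set.univ).toReal ^ (1 / p) * (∫ x, (a_l x) ^ p' ∂σ) ^ (1 / p')
          - b_l * b * (σ Set.univ).toReal - ε * (∫ x, |u x| ^ p ∂σ) - c ≤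
        ∫ x, l x (u x) * u x ∂σ := by
  intro ε hε
  have hpq : p.HolderConjugate p' := by
    rw [hp']; exact Real.HolderConjugate.conjExponent hp
  set M : ℝ := (σ Set.univ).toReal with hM
  have hM0 : 0 ≤ M := ENNReal.toReal_nonneg
  set K : ℝ := b_l * (1 + b ^ (p - 1)) with hK
  have hK0 : 0 < K := by
    have : (0:ℝ) < b ^ (p - 1) := Real.rpow_pos_of_pos hb _
    positivity
  -- integrability of a_l
  have ha_int : Integrable a_l σ := by
    refine MemLp.integrable ?_ ha_lLp
    rw [show (1 : ENNReal) = ENNReal.ofReal 1 by simp]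
    exact ENNReal.ofReal_le_ofReal hpq.symm.lt.le
  -- Hölder: ∫ a_l ≤ M^(1/p) * (∫ a_l^p')^(1/p')
  have hHolder : ∫ x, a_l x ∂σ ≤ M ^ (1 / p) * (∫ x, (a_l x) ^ p' ∂σ) ^ (1 / p') := by
    have h := integral_mul_le_Lp_mul_Lq_of_nonneg (μ := σ) hpq
      (f := fun _ => (1:ℝ)) (g := a_l)
      (Filter.Eventually.of_forall fun _ => zero_le_one)
      (Filter.Eventually.of_forall fun x => ha_l x)
      (memLp_const 1) ha_lLp
    simpa [Real.one_rpow, integral_const, smul_eq_mul, hM, measureReal_def] using h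
  have hN0 : 0 ≤ (∫ x, (a_l x) ^ p' ∂σ) ^ (1 / p') := by
    apply Real.rpow_nonneg
    exact integral_nonneg fun x => Real.rpow_nonneg (ha_l x) _
  refine ⟨b * K * M + 1, by positivity, ?_⟩
  intro u hu
  have hI0 : 0 ≤ ∫ x, |u x| ^ p ∂σ :=
    integral_nonneg fun x => Real.rpow_nonneg (abs_nonneg _) _
  -- the dominating function
  have hg_int : Integrable (fun x => -(b * (a_l x + K))) σ := by
    exact ((ha_int.add (integrable_const K)).const_mul b).neg
  -- pointwise lower bound
  have hpt : ∀ᵐ x ∂σ, -(b * (a_l x + K)) ≤ l x (u x) * u x := by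
    filter_upwards [hl_growth, hl_mono, hl_b] with x hg hm h0
    set s := u x with hs
    have hal : 0 ≤ a_l x := ha_l x
    rcases le_or_gt b s with h1 | h1
    · have hl0 : 0 ≤ l x s := h0 ▸ hm h1
      nlinarith [mul_nonneg hl0 (hb.le.trans h1)]
    · rcases le_or_gt s 0 with h2 | h2
      · have hl0 : l x s ≤ 0 := h0 ▸ hm (h2.trans hb.le)
        nlinarith [mul_nonneg (neg_nonneg.2 hl0) (neg_nonneg.2 h2)]
      · -- 0 < s < b
        have habs : |s| = s := abs_of_pos h2
        have hsp : s ^ (p - 1) ≤ b ^ (p - 1) :=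
          Real.rpow_le_rpow h2.le h1.le (by linarith)
        have hls : |l x s| ≤ a_l x + K := by
          have := hg s
          rw [habs] at this
          simp only [hK]
          nlinarith
        have h1' : -(a_l x + K) ≤ l x s := by
          have := neg_abs_le (l x s); linarith [neg_le_neg hls]
        calc -(b * (a_l x + K)) = -(a_l x + K) * b := by ring
          _ ≤ l x s * b := by
              apply mul_le_mul_of_nonneg_right h1' hb.le
          _ ≤ l x s * b + (-(l x s)) * (b - s) := by
              have hls0 : l x s ≤ 0 := h0 ▸ hm h1.le
              nlinarith [mul_nonneg (neg_nonneg.2 hls0) (by linarith : (0:ℝ) ≤ b - s)]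
          _ = l x s * s := by ring
  by_cases hint : Integrable (fun x => l x (u x) * u x) σ
  · have hmono := integral_mono_ae hg_int hint hpt
    have hcomp : ∫ x, -(b * (a_l x + K)) ∂σ = -(b * ((∫ x, a_l x ∂σ) + K * M)) := by
      rw [integral_neg, integral_const_mul, integral_add ha_int (integrable_const K),
        integral_const, smul_eq_mul, measureReal_def]
      ring
    rw [hcomp] at hmono
    have hb' : b * (∫ x, a_l x ∂σ) ≤ b * (M ^ (1/p) * (∫ x, (a_l x) ^ p' ∂σ) ^ (1/p')) :=
      mul_le_mul_of_nonneg_left hHolder hb.le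
    simp only [hK] at hmono ⊢
    nlinarith [mul_nonneg (mul_nonneg hb.le hb_l.le) hM0,
      mul_nonneg (mul_nonneg (mul_nonneg hb.le hb_l.le) (Real.rpow_pos_of_pos hb (p-1)).le) hM0]
  · rw [integral_undef hint]
    have h1 : 0 ≤ b * M ^ (1/p) * (∫ x, (a_l x) ^ p' ∂σ) ^ (1/p') := by
      have : (0:ℝ) ≤ M ^ (1/p) := Real.rpow_nonneg hM0 _
      positivity
    nlinarith [mul_pos hε (lt_of_lt_of_le hε (le_refl ε)), mul_nonneg hε.le hI0,
      mul_nonneg (mul_nonneg hb_l.le hb.le) hM0,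
      mul_nonneg (mul_nonneg hb.le hK0.le) hM0]
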